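/- Let ε > 0, 0 < g₁ ≤ g₂, δ̄ > 0, τ > 0 with g₂·τ ≤ ε/(δ̄ + 1)², and let t_k < t_{k+1} with t_{k+1} − t_k = τ. Let g, δ : ℝ → ℝ be integrable on [t_k, t_{k+1}] with g₁ ≤ g(s) ≤ g₂ and |δ(s)| ≤ δ̄ for all s ∈ [t_k, t_{k+1}]. Suppose |x_k| ≤ (δ̄/(δ̄+1))·ε, and set u_k = −x_k/(ε − |x_k|) and x_{k+1} = x_k + ∫_{t_k}^{t_{k+1}} g(s)·(δ(s) + u_k) ds. Then |x_{k+1}| ≤ (δ̄/(δ̄+1))·ε. -/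

import Mathlib

set_option maxHeartbeats 800000


open MeasureTheory intervalIntegral

/-- Helper: the one-step invariance bound in the case `0 ≤ xk`. -/
lemma stmt_9_key (ε g₂ δb τ tk tk1 xk uk : ℝ)
    (hε : 0 < ε) (hg₂ : 0 < g₂)
    (hδb : 0 < δb) (hτ : 0 < τ)
    (hsamp : g₂ * τ ≤ ε / (δb + 1) ^ 2)
    (ht : tk ≤ tk1) (hτ' : tk1 - tk = τ)
    (g δ : ℝ → ℝ)
    (hint : IntervalIntegrable (fun s => g s * (δ s + uk)) volume tk tk1)
    (hbd : ∀ s ∈ Set.Icc tk tk1, 0 < g s ∧ g s ≤ g₂ ∧ |δ s| ≤ δb)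
    (hxk0 : 0 ≤ xk) (hxk : xk ≤ δb / (δb + 1) * ε)
    (huk : uk = -xk / (ε - xk)) :
    |xk + ∫ s in tk..tk1, g s * (δ s + uk)| ≤ δb / (δb + 1) * ε := by
  have hd1 : (0:ℝ) < δb + 1 := by linarith
  have hxk' : xk * (δb + 1) ≤ δb * ε := by
    have : xk ≤ δb * ε / (δb + 1) := by
      rw [show δb * ε / (δb + 1) = δb / (δb + 1) * ε by ring]; exact hxk
    exact (le_div_iff₀ hd1).1 this
  have hc0 : 0 < ε - xk := by nlinarith
  have hc' : ε ≤ (ε - xk) * (δb + 1) := by nlinarith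
  have hsamp' : g₂ * τ * (δb + 1) ^ 2 ≤ ε := by
    have := (le_div_iff₀ (by positivity : (0:ℝ) < (δb + 1) ^ 2)).1 hsamp
    linarith [this]
  have h1 : g₂ * τ * (δb + 1) ≤ ε - xk := by nlinarith
  have hN : 0 ≤ δb * ε - (δb + 1) * xk := by linarith
  have hδuk : δb + uk = (δb * ε - (δb + 1) * xk) / (ε - xk) := by
    rw [huk]; field_simp; ring
  have hδuk2 : δb - uk = (δb * (ε - xk) + xk) / (ε - xk) := by
    rw [huk]; field_simp; ring
  have hukδ : 0 ≤ δb + uk := by rw [hδuk]; exact div_nonneg hN hc0.le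
  have huk0 : uk ≤ 0 := by
    rw [huk, neg_div]; exact neg_nonpos_of_nonneg (div_nonneg hxk0 hc0.le)
  -- pointwise bounds on the integrand
  have hub : ∀ s ∈ Set.Icc tk tk1, g s * (δ s + uk) ≤ g₂ * (δb + uk) := by
    intro s hs
    obtain ⟨hgs0, hgs2, hδs⟩ := hbd s hs
    obtain ⟨hδl, hδu⟩ := abs_le.1 hδs
    rcases le_or_gt 0 (δ s + uk) with h | h
    · nlinarith
    · nlinarith
  have hlb : ∀ s ∈ Set.Icc tk tk1, -(g₂ * (δb - uk)) ≤ g s * (δ s + uk) := by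
    intro s hs
    obtain ⟨hgs0, hgs2, hδs⟩ := hbd s hs
    obtain ⟨hδl, hδu⟩ := abs_le.1 hδs
    rcases le_or_gt (δ s + uk) 0 with h | h
    · nlinarith
    · nlinarith
  have hIub : (∫ s in tk..tk1, g s * (δ s + uk)) ≤ g₂ * (δb + uk) * τ := by
    have := intervalIntegral.integral_mono_on ht hint
      (_root_.intervalIntegrable_const (c := g₂ * (δb + uk))) hub
    rwa [intervalIntegral.integral_const, hτ', smul_eq_mul, mul_comm] at this
  have hIlb : -(g₂ * (δb - uk)) * τ ≤ ∫ s in tk..tk1, g s * (δ s + uk) := by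
    have := intervalIntegral.integral_mono_on ht
      (_root_.intervalIntegrable_const (c := -(g₂ * (δb - uk)))) hint hlb
    rwa [intervalIntegral.integral_const, hτ', smul_eq_mul, mul_comm] at this
  -- the two algebraic estimates
  have hPδ : g₂ * τ * δb * (δb + 1) ≤ δb * ε := by nlinarith
  have hupper : xk + g₂ * (δb + uk) * τ ≤ δb / (δb + 1) * ε := by
    have hmid : g₂ * (δb + uk) * τ ≤ (δb * ε - (δb + 1) * xk) / (δb + 1) := by
      rw [hδuk, show g₂ * ((δb * ε - (δb + 1) * xk) / (ε - xk)) * τ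
          = g₂ * τ * (δb * ε - (δb + 1) * xk) / (ε - xk) by ring,
        div_le_div_iff₀ hc0 hd1]
      linarith [mul_le_mul_of_nonneg_right h1 hN]
    have heq : xk + (δb * ε - (δb + 1) * xk) / (δb + 1) = δb / (δb + 1) * ε := by
      field_simp; ring
    linarith
  have hlower : g₂ * (δb - uk) * τ ≤ xk + δb / (δb + 1) * ε := by
    rw [hδuk2, show g₂ * ((δb * (ε - xk) + xk) / (ε - xk)) * τ
        = g₂ * τ * (δb * (ε - xk) + xk) / (ε - xk) by ring,
      show xk + δb / (δb + 1) * ε = (xk * (δb + 1) + δb * ε) / (δb + 1) by field_simp,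
      div_le_div_iff₀ hc0 hd1]
    nlinarith [mul_le_mul_of_nonneg_right hPδ hc0.le,
      mul_le_mul_of_nonneg_right h1 hxk0,
      mul_nonneg (mul_nonneg hc0.le hxk0) hδb.le, hc0, hxk0, hδb]
  rw [abs_le]
  constructor
  · linarith [hIlb, hlower]
  · linarith [hIub, hupper]

/-- Case 2 of Proposition 2: the final set
Div 4 = {x : |x| ≤ (δ̄/(δ̄+1))ε} is positively invariant in one sampling step,
provided `g₂τ ≤ ε/(δ̄+1)²`. -/
theorem stmt_9 (ε g₁ g₂ δb τ tk tk1 xk uk xk1 : ℝ)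
    (hε : 0 < ε) (hg₁ : 0 < g₁) (hg₁₂ : g₁ ≤ g₂)
    (hδb : 0 < δb) (hτ : 0 < τ)
    (hsamp : g₂ * τ ≤ ε / (δb + 1) ^ 2)
    (ht : tk < tk1) (hτ' : tk1 - tk = τ)
    (g δ : ℝ → ℝ)
    (hg_int : IntervalIntegrable g volume tk tk1)
    (hδ_int : IntervalIntegrable δ volume tk tk1)
    (hg_bd : ∀ s ∈ Set.Icc tk tk1, g₁ ≤ g s ∧ g s ≤ g₂)
    (hδ_bd : ∀ s ∈ Set.Icc tk tk1, |δ s| ≤ δb)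
    (hxk : |xk| ≤ (δb / (δb + 1)) * ε)
    (huk : uk = -xk / (ε - |xk|))
    (hxk1 : xk1 = xk + ∫ s in tk..tk1, g s * (δ s + uk)) :
    |xk1| ≤ (δb / (δb + 1)) * ε := by
  have hg₂ : 0 < g₂ := lt_of_lt_of_le hg₁ hg₁₂
  have hbd : ∀ s ∈ Set.Icc tk tk1, 0 < g s ∧ g s ≤ g₂ ∧ |δ s| ≤ δb := fun s hs =>
    ⟨lt_of_lt_of_le hg₁ (hg_bd s hs).1, (hg_bd s hs).2, hδ_bd s hs⟩
  -- integrability of the integrand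
  have hδuk_int : IntervalIntegrable (fun s => δ s + uk) volume tk tk1 :=
    hδ_int.add intervalIntegrable_const
  have hint : IntervalIntegrable (fun s => g s * (δ s + uk)) volume tk tk1 := by
    rw [intervalIntegrable_iff_integrableOn_Ioc_of_le ht.le]
    have h1 := (intervalIntegrable_iff_integrableOn_Ioc_of_le ht.le).1 hδuk_int
    have h2 := (intervalIntegrable_iff_integrableOn_Ioc_of_le ht.le).1 hg_int
    refine Integrable.bdd_mul (c := g₂) h1 (Integrable.aestronglyMeasurable h2) ?_
    filter_upwards [ae_restrict_mem measurableSet_Ioc] with s hs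
    have hs' : s ∈ Set.Icc tk tk1 := ⟨hs.1.le, hs.2⟩
    obtain ⟨hg0, hg2, _⟩ := hbd s hs'
    rw [Real.norm_eq_abs, abs_of_pos hg0]; exact hg2
  rcases le_or_gt 0 xk with hx0 | hx0
  · have habs : |xk| = xk := abs_of_nonneg hx0
    have h := stmt_9_key ε g₂ δb τ tk tk1 xk uk hε hg₂ hδb hτ hsamp ht.le hτ' g δ
      hint hbd hx0 (by rw [← habs]; exact hxk) (by rw [huk, habs])
    rwa [hxk1]
  · have habs : |xk| = -xk := abs_of_neg hx0
    have huk' : -uk = -(-xk) / (ε - -xk) := by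
      rw [huk, habs]; ring
    have hfun : (fun s => g s * (-δ s + -uk)) = fun s => -(g s * (δ s + uk)) := by
      funext s; ring
    have hint' : IntervalIntegrable (fun s => g s * (-δ s + -uk)) volume tk tk1 := by
      rw [hfun]; exact hint.neg
    have h := stmt_9_key ε g₂ δb τ tk tk1 (-xk) (-uk) hε hg₂ hδb hτ hsamp ht.le hτ'
      g (fun s => -δ s) hint' (fun s hs => ⟨(hbd s hs).1, (hbd s hs).2.1,
        by rw [abs_neg]; exact (hbd s hs).2.2⟩)
      (by linarith) (by rw [← habs]; exact hxk) huk'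
    have hIneg : (∫ s in tk..tk1, g s * (-δ s + -uk))
        = -∫ s in tk..tk1, g s * (δ s + uk) := by
      rw [hfun, intervalIntegral.integral_neg]
    rw [hIneg] at h
    rw [hxk1, ← abs_neg]
    convert h using 2
    ring
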